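/- Let S : ℝ^d → ℝ^{d×d} be twice continuously differentiable with S(x) skew-symmetric for every x, let H : ℝ^d → ℝ be three times continuously differentiable, and set f(x) = S(x)∇H(x). Fix x₀ ∈ ℝ^d and let y : (−ε, ε) → ℝ^d be the exact solution of y'(t) = f(y(t)) with y(0) = x₀. Suppose x̂ : (−ε, ε) → ℝ^d satisfies x̂(h) → x₀ as h → 0 and, for each h, the AVF discrete gradient scheme x̂(h) = x₀ + h S((x₀ + x̂(h))/2) ∫₀¹ ∇H((1−ξ)x₀ + ξx̂(h)) dξ. Then the scheme is of second order: ‖x̂(h) − y(h)‖ = O(h³) as h → 0. -/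

import Mathlib

open scoped RealInnerProductSpace
open Asymptotics Filter

/-- Quadratic Taylor bound for `C²` functions near a point. -/
lemma quad_taylor_bound {E F : Type*} [NormedAddCommGroup E] [NormedSpace ℝ E]
    [NormedAddCommGroup F] [NormedSpace ℝ F] {f : E → F} {x₀ : E}
    (hf : ContDiffAt ℝ 2 f x₀) :
    ∃ K r : ℝ, 0 ≤ K ∧ 0 < r ∧ ∀ x, ‖x - x₀‖ ≤ r →
      ‖f x - f x₀ - fderiv ℝ f x₀ (x - x₀)‖ ≤ K * ‖x - x₀‖ ^ 2 := by
  have hf1 : ContDiffAt ℝ 1 (fderiv ℝ f) x₀ := hf.fderiv_right (by norm_num)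
  obtain ⟨K, t, ht, hlip⟩ := hf1.exists_lipschitzOnWith
  obtain ⟨u, hu, hcd⟩ := hf.contDiffOn (m := 1) (by norm_num) (by simp)
  obtain ⟨r1, hr1, hball1⟩ := Metric.mem_nhds_iff.1 ht
  obtain ⟨r2, hr2, hball2⟩ := Metric.mem_nhds_iff.1 hu
  set r := min r1 r2 / 2 with hrdef
  have hrpos : 0 < r := by positivity
  refine ⟨K, r, K.coe_nonneg, hrpos, fun x hx => ?_⟩
  have hsub : Metric.closedBall x₀ r ⊆ Metric.ball x₀ (min r1 r2) := by
    intro z hz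
    have := Metric.mem_closedBall.1 hz
    refine Metric.mem_ball.2 (lt_of_le_of_lt this ?_)
    have : 0 < min r1 r2 := lt_min hr1 hr2
    linarith
  have hsub1 : Metric.closedBall x₀ r ⊆ t := fun z hz =>
    hball1 ((Metric.ball_subset_ball (min_le_left _ _)) (hsub hz))
  have hsub2 : Metric.closedBall x₀ r ⊆ Metric.ball x₀ r2 := fun z hz =>
    Metric.ball_subset_ball (min_le_right _ _) (hsub hz)
  -- differentiability on the closed ball
  have hdiff : ∀ z ∈ Metric.closedBall x₀ r, HasFDerivWithinAt f (fderiv ℝ f z)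
      (Metric.closedBall x₀ ‖x - x₀‖) z := by
    intro z hz
    have : ContDiffAt ℝ 1 f z := by
      have : ContDiffOn ℝ 1 f (Metric.ball x₀ r2) := hcd.mono hball2
      exact this.contDiffAt (Metric.isOpen_ball.mem_nhds (hsub2 hz))
    exact (this.differentiableAt one_ne_zero).hasFDerivAt.hasFDerivWithinAt
  have hxball : Metric.closedBall x₀ ‖x - x₀‖ ⊆ Metric.closedBall x₀ r := fun z hz =>
    Metric.closedBall_subset_closedBall hx hz
  have hbound : ∀ z ∈ Metric.closedBall x₀ ‖x - x₀‖,
      ‖fderiv ℝ f z - fderiv ℝ f x₀‖ ≤ (K : ℝ) * ‖x - x₀‖ := by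
    intro z hz
    have hz' : z ∈ t := hsub1 (hxball hz)
    have hx0 : x₀ ∈ t := hsub1 (Metric.mem_closedBall_self hrpos.le)
    have h1 := hlip.dist_le_mul z hz' x₀ hx0
    rw [dist_eq_norm] at h1
    refine h1.trans ?_
    exact mul_le_mul_of_nonneg_left (Metric.mem_closedBall.1 hz) K.coe_nonneg
  have := Convex.norm_image_sub_le_of_norm_hasFDerivWithin_le'
    (f := f) (f' := fun z => fderiv ℝ f z) (φ := fderiv ℝ f x₀) (C := (K : ℝ) * ‖x - x₀‖)
    (s := Metric.closedBall x₀ ‖x - x₀‖)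
    (fun z hz => (hdiff z (hxball hz)))
    hbound (convex_closedBall _ _)
    (Metric.mem_closedBall_self (norm_nonneg _))
    (by simpa using Metric.mem_closedBall.2 (le_of_eq (dist_eq_norm x x₀)))
  calc ‖f x - f x₀ - fderiv ℝ f x₀ (x - x₀)‖ ≤ (K : ℝ) * ‖x - x₀‖ * ‖x - x₀‖ := this
    _ = (K : ℝ) * ‖x - x₀‖ ^ 2 := by ring

lemma integral_segment_expansion {E : Type*} [NormedAddCommGroup E] [NormedSpace ℝ E]
    [CompleteSpace E] {g : E → E} (hg : Continuous g) {x₀ : E} {B : E →L[ℝ] E}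
    {Kg rg : ℝ} (hKg : 0 ≤ Kg)
    (hq : ∀ x, ‖x - x₀‖ ≤ rg → ‖g x - g x₀ - B (x - x₀)‖ ≤ Kg * ‖x - x₀‖ ^ 2)
    (e : E) (he : ‖e‖ ≤ rg) :
    ‖(∫ ξ in (0:ℝ)..1, g (x₀ + ξ • e)) - g x₀ - (2⁻¹ : ℝ) • B e‖ ≤ Kg * ‖e‖ ^ 2 := by
  have hce : Continuous (fun ξ : ℝ => g (x₀ + ξ • e)) := by
    exact hg.comp (by continuity)
  have hi1 : IntervalIntegrable (fun ξ : ℝ => g (x₀ + ξ • e) - g x₀)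
      MeasureTheory.volume 0 1 := (hce.sub continuous_const).intervalIntegrable _ _
  have hi2 : IntervalIntegrable (fun ξ : ℝ => ξ • B e) MeasureTheory.volume 0 1 := by
    exact (continuous_id.smul continuous_const).intervalIntegrable _ _
  have hi0 : IntervalIntegrable (fun _ : ℝ => g x₀) MeasureTheory.volume 0 1 :=
    continuous_const.intervalIntegrable _ _
  have hint : (∫ ξ in (0:ℝ)..1, (g (x₀ + ξ • e) - g x₀ - ξ • B e))
      = (∫ ξ in (0:ℝ)..1, g (x₀ + ξ • e)) - g x₀ - (2⁻¹ : ℝ) • B e := by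
    rw [intervalIntegral.integral_sub hi1 hi2,
      intervalIntegral.integral_sub (hce.intervalIntegrable _ _) hi0,
      intervalIntegral.integral_const, intervalIntegral.integral_smul_const, integral_id]
    norm_num
  rw [← hint]
  have hb := intervalIntegral.norm_integral_le_of_norm_le_const
    (a := (0:ℝ)) (b := 1) (C := Kg * ‖e‖ ^ 2)
    (f := fun ξ : ℝ => g (x₀ + ξ • e) - g x₀ - ξ • B e) ?_
  · simpa using hb
  · intro ξ hξ
    rw [Set.uIoc_of_le (by norm_num : (0:ℝ) ≤ 1)] at hξ
    have hξ0 : 0 < ξ := hξ.1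
    have hξ1 : ξ ≤ 1 := hξ.2
    have hn : ‖x₀ + ξ • e - x₀‖ = ξ * ‖e‖ := by
      rw [add_sub_cancel_left, norm_smul, Real.norm_eq_abs, abs_of_pos hξ0]
    have hle : ‖x₀ + ξ • e - x₀‖ ≤ rg := by
      rw [hn]
      calc ξ * ‖e‖ ≤ 1 * ‖e‖ := by
            exact mul_le_mul_of_nonneg_right hξ1 (norm_nonneg _)
        _ = ‖e‖ := one_mul _
        _ ≤ rg := he
    have := hq (x₀ + ξ • e) hle
    rw [hn, add_sub_cancel_left, map_smul] at this
    calc ‖g (x₀ + ξ • e) - g x₀ - ξ • B e‖ ≤ Kg * (ξ * ‖e‖) ^ 2 := this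
      _ ≤ Kg * ‖e‖ ^ 2 := by
          have h2 : ξ ^ 2 ≤ 1 := by nlinarith
          have h3 : (ξ * ‖e‖) ^ 2 = ξ ^ 2 * ‖e‖ ^ 2 := by ring
          rw [h3]
          nlinarith [mul_nonneg (mul_nonneg hKg (sq_nonneg ‖e‖)) (sub_nonneg.2 h2)]

lemma clm_expand' {E : Type*} [NormedAddCommGroup E] [NormedSpace ℝ E]
    (T S₀ P : E →L[ℝ] E) (Φ g₀ q w : E) (hw : w = S₀ q + P g₀) :
    T Φ - S₀ g₀ - w = S₀ (Φ - g₀ - q) + P q + P (Φ - g₀ - q) + (T - S₀ - P) Φ := by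
  simp only [hw, map_sub, ContinuousLinearMap.sub_apply]
  abel

set_option maxHeartbeats 1000000 in
lemma scheme_taylor2 {E : Type*} [NormedAddCommGroup E] [NormedSpace ℝ E] [CompleteSpace E]
    {S : E → (E →L[ℝ] E)} {g : E → E} {x₀ : E}
    {A : E →L[ℝ] (E →L[ℝ] E)} {B D : E →L[ℝ] E}
    (hgc : Continuous g)
    {KS rS Kg rg : ℝ} (hKS : 0 ≤ KS) (hrS : 0 < rS) (hKg : 0 ≤ Kg) (hrg : 0 < rg)
    (hSq : ∀ x, ‖x - x₀‖ ≤ rS → ‖S x - S x₀ - A (x - x₀)‖ ≤ KS * ‖x - x₀‖ ^ 2)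
    (hgq : ∀ x, ‖x - x₀‖ ≤ rg → ‖g x - g x₀ - B (x - x₀)‖ ≤ Kg * ‖x - x₀‖ ^ 2)
    (hD : ∀ v, D v = S x₀ (B v) + (A v) (g x₀))
    {ε : ℝ} (hε : 0 < ε)
    {xh : ℝ → E} (hxhlim : Tendsto xh (nhds 0) (nhds x₀))
    (hscheme : ∀ h ∈ Set.Ioo (-ε) ε, xh h = x₀ + h •
      (S ((2 : ℝ)⁻¹ • (x₀ + xh h))) (∫ ξ in (0:ℝ)..1, g ((1 - ξ) • x₀ + ξ • xh h))) :
    ∃ Cx : ℝ, ∀ᶠ h in nhds (0:ℝ),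
      ‖xh h - x₀ - h • (S x₀ (g x₀)) - (h ^ 2 / 2) • D (S x₀ (g x₀))‖ ≤ Cx * |h| ^ 3 := by
  have heT : Tendsto (fun h => ‖xh h - x₀‖) (nhds 0) (nhds 0) := by
    have h1 : Tendsto (fun h => xh h - x₀) (nhds 0) (nhds (x₀ - x₀)) :=
      hxhlim.sub tendsto_const_nhds
    rw [sub_self] at h1
    simpa using h1.norm
  obtain ⟨r0, hr0def⟩ : ∃ r0 : ℝ, r0 = min 1 (min rS rg) := ⟨_, rfl⟩
  have hr0 : 0 < r0 := by rw [hr0def]; exact lt_min one_pos (lt_min hrS hrg)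
  have hev_small : ∀ᶠ h in nhds (0:ℝ), ‖xh h - x₀‖ ≤ r0 :=
    heT.eventually (eventually_le_nhds hr0)
  have hev_Ioo : ∀ᶠ h in nhds (0:ℝ), h ∈ Set.Ioo (-ε) ε :=
    eventually_mem_nhds_iff.mpr (Ioo_mem_nhds (by linarith) hε) |>.mono
      (fun _ h => mem_of_mem_nhds h)
  obtain ⟨C, hCdef⟩ : ∃ C : ℝ, C = ‖S x₀‖ * Kg + 2⁻¹ * ‖A‖ * (2⁻¹ * ‖B‖) + 2⁻¹ * ‖A‖ * Kg
    + KS * (‖g x₀‖ + 2⁻¹ * ‖B‖ + Kg) := ⟨_, rfl⟩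
  have hC0 : 0 ≤ C := by rw [hCdef]; positivity
  have hKey : ∀ᶠ h in nhds (0:ℝ), ‖(S ((2 : ℝ)⁻¹ • (x₀ + xh h)))
      (∫ ξ in (0:ℝ)..1, g ((1 - ξ) • x₀ + ξ • xh h)) - S x₀ (g x₀)
      - (2⁻¹:ℝ) • D (xh h - x₀)‖ ≤ C * ‖xh h - x₀‖ ^ 2 := by
    filter_upwards [hev_small] with h hsm
    obtain ⟨e, hedef⟩ : ∃ e : E, e = xh h - x₀ := ⟨_, rfl⟩
    rw [← hedef] at hsm ⊢
    have hn0 : (0:ℝ) ≤ ‖e‖ := norm_nonneg _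
    rw [hr0def] at hsm
    have hn1 : ‖e‖ ≤ 1 := le_trans hsm (min_le_left _ _)
    have hnS : ‖e‖ ≤ rS := le_trans hsm (le_trans (min_le_right _ _) (min_le_left _ _))
    have hng : ‖e‖ ≤ rg := le_trans hsm (le_trans (min_le_right _ _) (min_le_right _ _))
    have hmid : (2 : ℝ)⁻¹ • (x₀ + xh h) = x₀ + (2⁻¹:ℝ) • e := by
      rw [hedef]; module
    have hE1 : ‖S ((2 : ℝ)⁻¹ • (x₀ + xh h)) - S x₀ - (2⁻¹:ℝ) • A e‖ ≤ KS * ‖e‖ ^ 2 := by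
      have harg : ‖x₀ + (2⁻¹:ℝ) • e - x₀‖ ≤ rS := by
        rw [add_sub_cancel_left, norm_smul, norm_inv, Real.norm_ofNat]
        linarith
      have h1 := hSq (x₀ + (2⁻¹:ℝ) • e) harg
      rw [add_sub_cancel_left, map_smul, norm_smul, norm_inv, Real.norm_ofNat] at h1
      rw [hmid]
      refine h1.trans ?_
      have h2 : (2⁻¹ * ‖e‖) ^ 2 ≤ ‖e‖ ^ 2 := by nlinarith
      nlinarith
    have hseg : ∀ ξ : ℝ, (1 - ξ) • x₀ + ξ • xh h = x₀ + ξ • e := by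
      intro ξ; rw [hedef]; module
    have hΦeq : (∫ ξ in (0:ℝ)..1, g ((1 - ξ) • x₀ + ξ • xh h))
        = ∫ ξ in (0:ℝ)..1, g (x₀ + ξ • e) :=
      intervalIntegral.integral_congr (fun ξ _ => by rw [hseg])
    have hE2 : ‖(∫ ξ in (0:ℝ)..1, g ((1 - ξ) • x₀ + ξ • xh h)) - g x₀ - (2⁻¹:ℝ) • B e‖
        ≤ Kg * ‖e‖ ^ 2 := by
      rw [hΦeq]
      exact integral_segment_expansion hgc hKg hgq e hng
    have hw : (2⁻¹:ℝ) • D e = (S x₀) ((2⁻¹:ℝ) • B e) + ((2⁻¹:ℝ) • A e) (g x₀) := by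
      rw [hD e]
      simp [smul_add, map_smul, ContinuousLinearMap.smul_apply]
    rw [clm_expand' (S ((2 : ℝ)⁻¹ • (x₀ + xh h))) (S x₀) ((2⁻¹:ℝ) • A e)
      (∫ ξ in (0:ℝ)..1, g ((1 - ξ) • x₀ + ξ • xh h)) (g x₀) ((2⁻¹:ℝ) • B e)
      ((2⁻¹:ℝ) • D e) hw]
    obtain ⟨Φ, hΦdef⟩ : ∃ Φ : E, Φ = ∫ ξ in (0:ℝ)..1, g ((1 - ξ) • x₀ + ξ • xh h) := ⟨_, rfl⟩
    rw [← hΦdef] at hE2 ⊢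
    obtain ⟨ρ, hρdef⟩ : ∃ ρ : E, ρ = Φ - g x₀ - (2⁻¹:ℝ) • B e := ⟨_, rfl⟩
    rw [← hρdef] at hE2 ⊢
    have hPn : ‖(2⁻¹:ℝ) • A e‖ ≤ 2⁻¹ * ‖A‖ * ‖e‖ := by
      have hns := norm_smul (α := ℝ) (2⁻¹:ℝ) (A e)
      rw [hns, norm_inv, Real.norm_ofNat, mul_assoc]
      exact mul_le_mul_of_nonneg_left (A.le_opNorm e) (by norm_num)
    have hqn : ‖(2⁻¹:ℝ) • B e‖ ≤ 2⁻¹ * ‖B‖ * ‖e‖ := by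
      rw [norm_smul, norm_inv, Real.norm_ofNat, mul_assoc]
      exact mul_le_mul_of_nonneg_left (B.le_opNorm e) (by norm_num)
    have hΦn : ‖Φ‖ ≤ ‖g x₀‖ + 2⁻¹ * ‖B‖ * ‖e‖ + Kg * ‖e‖ ^ 2 := by
      have hre : Φ = g x₀ + (2⁻¹:ℝ) • B e + ρ := by rw [hρdef]; abel
      rw [hre]
      have h1 := norm_add_le (g x₀ + (2⁻¹:ℝ) • B e) ρ
      have h2 := norm_add_le (g x₀) ((2⁻¹:ℝ) • B e)
      linarith
    have t1 : ‖(S x₀) ρ‖ ≤ ‖S x₀‖ * (Kg * ‖e‖ ^ 2) :=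
      ((S x₀).le_opNorm ρ).trans (mul_le_mul_of_nonneg_left hE2 (norm_nonneg _))
    have t2 : ‖((2⁻¹:ℝ) • A e) ((2⁻¹:ℝ) • B e)‖
        ≤ (2⁻¹ * ‖A‖ * ‖e‖) * (2⁻¹ * ‖B‖ * ‖e‖) :=
      (ContinuousLinearMap.le_opNorm _ _).trans
        (mul_le_mul hPn hqn (norm_nonneg _) (by positivity))
    have t3 : ‖((2⁻¹:ℝ) • A e) ρ‖ ≤ (2⁻¹ * ‖A‖ * ‖e‖) * (Kg * ‖e‖ ^ 2) :=
      (ContinuousLinearMap.le_opNorm _ _).trans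
        (mul_le_mul hPn hE2 (norm_nonneg _) (by positivity))
    have t4 : ‖(S ((2 : ℝ)⁻¹ • (x₀ + xh h)) - S x₀ - (2⁻¹:ℝ) • A e) Φ‖
        ≤ (KS * ‖e‖ ^ 2) * (‖g x₀‖ + 2⁻¹ * ‖B‖ * ‖e‖ + Kg * ‖e‖ ^ 2) :=
      (ContinuousLinearMap.le_opNorm _ _).trans
        (mul_le_mul hE1 hΦn (norm_nonneg _) (by positivity))
    have hsum := norm_add_le ((S x₀) ρ + ((2⁻¹:ℝ) • A e) ((2⁻¹:ℝ) • B e)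
        + ((2⁻¹:ℝ) • A e) ρ) ((S ((2 : ℝ)⁻¹ • (x₀ + xh h)) - S x₀ - (2⁻¹:ℝ) • A e) Φ)
    have hsum2 := norm_add_le ((S x₀) ρ + ((2⁻¹:ℝ) • A e) ((2⁻¹:ℝ) • B e))
        (((2⁻¹:ℝ) • A e) ρ)
    have hsum3 := norm_add_le ((S x₀) ρ) (((2⁻¹:ℝ) • A e) ((2⁻¹:ℝ) • B e))
    have h34 : ‖e‖ ^ 3 ≤ ‖e‖ ^ 2 := by nlinarith
    have h44 : ‖e‖ ^ 4 ≤ ‖e‖ ^ 2 := by nlinarith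
    rw [hCdef]
    nlinarith [mul_le_mul_of_nonneg_left h34 (by positivity : (0:ℝ) ≤ 2⁻¹ * ‖A‖ * Kg),
      mul_le_mul_of_nonneg_left h34 (by positivity : (0:ℝ) ≤ KS * (2⁻¹ * ‖B‖)),
      mul_le_mul_of_nonneg_left h44 (by positivity : (0:ℝ) ≤ KS * Kg)]
  -- bootstrap chain
  obtain ⟨Mf, hMfdef⟩ : ∃ Mf : ℝ, Mf = ‖S x₀ (g x₀)‖ + 2⁻¹ * ‖D‖ + C := ⟨_, rfl⟩
  have hMf0 : 0 ≤ Mf := by rw [hMfdef]; positivity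
  obtain ⟨C1, hC1def⟩ : ∃ C1 : ℝ, C1 = (2⁻¹ * ‖D‖ + C) * Mf := ⟨_, rfl⟩
  have hC10 : 0 ≤ C1 := by rw [hC1def]; positivity
  refine ⟨C * Mf ^ 2 + 2⁻¹ * ‖D‖ * C1, ?_⟩
  filter_upwards [hKey, hev_small, hev_Ioo] with h hk hsm hIoo
  obtain ⟨v, hvdef⟩ : ∃ v : E, v = (S ((2 : ℝ)⁻¹ • (x₀ + xh h)))
    (∫ ξ in (0:ℝ)..1, g ((1 - ξ) • x₀ + ξ • xh h)) := ⟨_, rfl⟩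
  rw [← hvdef] at hk
  have hsch : xh h - x₀ = h • v := by
    rw [hvdef]; exact sub_eq_iff_eq_add'.mpr (hscheme h hIoo)
  have hn1 : ‖xh h - x₀‖ ≤ 1 := le_trans hsm (by rw [hr0def]; exact min_le_left _ _)
  have hn0 : (0:ℝ) ≤ ‖xh h - x₀‖ := norm_nonneg _
  have hsq1 : ‖xh h - x₀‖ ^ 2 ≤ ‖xh h - x₀‖ := by nlinarith
  have hDe : ‖(2⁻¹:ℝ) • D (xh h - x₀)‖ ≤ 2⁻¹ * ‖D‖ * ‖xh h - x₀‖ := by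
    rw [norm_smul, norm_inv, Real.norm_ofNat, mul_assoc]
    exact mul_le_mul_of_nonneg_left (D.le_opNorm _) (by norm_num)
  have hv : ‖v‖ ≤ Mf := by
    have hre : v = (v - S x₀ (g x₀) - (2⁻¹:ℝ) • D (xh h - x₀)) + S x₀ (g x₀)
        + (2⁻¹:ℝ) • D (xh h - x₀) := by abel
    rw [hMfdef]
    have h1 := norm_add_le ((v - S x₀ (g x₀) - (2⁻¹:ℝ) • D (xh h - x₀)) + S x₀ (g x₀))
      ((2⁻¹:ℝ) • D (xh h - x₀))
    have h2 := norm_add_le (v - S x₀ (g x₀) - (2⁻¹:ℝ) • D (xh h - x₀)) (S x₀ (g x₀))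
    rw [← hre] at h1
    have h3 : C * ‖xh h - x₀‖ ^ 2 ≤ C := by nlinarith
    have h4 : 2⁻¹ * ‖D‖ * ‖xh h - x₀‖ ≤ 2⁻¹ * ‖D‖ := by
      nlinarith [norm_nonneg D]
    linarith [hk, hDe]
  have hnh : ‖xh h - x₀‖ ≤ Mf * |h| := by
    rw [hsch, norm_smul, Real.norm_eq_abs, mul_comm]
    exact mul_le_mul_of_nonneg_right hv (abs_nonneg h)
  have hstep3 : ‖xh h - x₀ - h • S x₀ (g x₀)‖ ≤ C1 * h ^ 2 := by
    have hre : xh h - x₀ - h • S x₀ (g x₀) = h • (v - S x₀ (g x₀)) := by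
      rw [hsch, smul_sub]
    rw [hre, norm_smul, Real.norm_eq_abs]
    have hvf : ‖v - S x₀ (g x₀)‖ ≤ (2⁻¹ * ‖D‖ + C) * ‖xh h - x₀‖ := by
      have hre2 : v - S x₀ (g x₀) = (v - S x₀ (g x₀) - (2⁻¹:ℝ) • D (xh h - x₀))
          + (2⁻¹:ℝ) • D (xh h - x₀) := by abel
      rw [hre2]
      refine (norm_add_le _ _).trans ?_
      have h5 : C * ‖xh h - x₀‖ ^ 2 ≤ C * ‖xh h - x₀‖ :=
        mul_le_mul_of_nonneg_left hsq1 hC0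
      linarith [hk, hDe]
    calc |h| * ‖v - S x₀ (g x₀)‖ ≤ |h| * ((2⁻¹ * ‖D‖ + C) * (Mf * |h|)) := by
          refine mul_le_mul_of_nonneg_left (hvf.trans ?_) (abs_nonneg h)
          exact mul_le_mul_of_nonneg_left hnh (by positivity)
      _ = C1 * |h| ^ 2 := by rw [hC1def]; ring
      _ = C1 * h ^ 2 := by rw [sq_abs]
  have hidn : xh h - x₀ - h • S x₀ (g x₀) - (h ^ 2 / 2) • D (S x₀ (g x₀))
      = h • (v - S x₀ (g x₀) - (2⁻¹:ℝ) • D (xh h - x₀))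
        + (h * 2⁻¹) • (D (xh h - x₀) - h • D (S x₀ (g x₀))) := by
    rw [hsch, map_smul]
    module
  rw [hidn]
  have hDlin : D (xh h - x₀) - h • D (S x₀ (g x₀)) = D (xh h - x₀ - h • S x₀ (g x₀)) := by
    simp only [map_sub, map_smul]
  have habs2 : |(h * 2⁻¹ : ℝ)| = |h| * 2⁻¹ := by
    rw [abs_mul]
    norm_num
  have hb2 : ‖(h * 2⁻¹) • (D (xh h - x₀) - h • D (S x₀ (g x₀)))‖
      ≤ |h| * 2⁻¹ * (‖D‖ * (C1 * h ^ 2)) := by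
    rw [hDlin, norm_smul, Real.norm_eq_abs, habs2]
    refine mul_le_mul_of_nonneg_left ?_ (by positivity)
    exact (D.le_opNorm _).trans (mul_le_mul_of_nonneg_left hstep3 (norm_nonneg _))
  have hb1 : ‖h • (v - S x₀ (g x₀) - (2⁻¹:ℝ) • D (xh h - x₀))‖
      ≤ |h| * (C * (Mf * |h|) ^ 2) := by
    rw [norm_smul, Real.norm_eq_abs]
    refine mul_le_mul_of_nonneg_left (hk.trans ?_) (abs_nonneg h)
    refine mul_le_mul_of_nonneg_left ?_ hC0
    nlinarith [abs_nonneg h]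
  refine (norm_add_le _ _).trans ?_
  calc ‖h • (v - S x₀ (g x₀) - (2⁻¹:ℝ) • D (xh h - x₀))‖
      + ‖(h * 2⁻¹) • (D (xh h - x₀) - h • D (S x₀ (g x₀)))‖
      ≤ |h| * (C * (Mf * |h|) ^ 2) + |h| * 2⁻¹ * (‖D‖ * (C1 * h ^ 2)) := add_le_add hb1 hb2
    _ = (C * Mf ^ 2 + 2⁻¹ * ‖D‖ * C1) * |h| ^ 3 := by
        rw [← sq_abs h]; ring

lemma ode_taylor2 {E : Type*} [NormedAddCommGroup E] [NormedSpace ℝ E] [CompleteSpace E]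
    {f : E → E} {x₀ : E} {D : E →L[ℝ] E} (hfc : Continuous f)
    {Kf rf : ℝ} (hKf : 0 ≤ Kf) (hrf : 0 < rf)
    (hq : ∀ x, ‖x - x₀‖ ≤ rf → ‖f x - f x₀ - D (x - x₀)‖ ≤ Kf * ‖x - x₀‖ ^ 2)
    {ε : ℝ} (hε : 0 < ε) {y : ℝ → E} (hy0 : y 0 = x₀)
    (hy : ∀ t ∈ Set.Ioo (-ε) ε, HasDerivAt y (f (y t)) t) :
    ∃ Cy δ : ℝ, 0 < δ ∧ ∀ h, |h| < δ →
      ‖y h - x₀ - h • f x₀ - (h ^ 2 / 2) • D (f x₀)‖ ≤ Cy * |h| ^ 3 := by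
  have hyc : ∀ t ∈ Set.Ioo (-ε) ε, ContinuousAt y t := fun t ht => (hy t ht).continuousAt
  have h0mem : (0:ℝ) ∈ Set.Ioo (-ε) ε := ⟨by linarith, hε⟩
  set M := ‖f x₀‖ + 1 with hMdef
  have hM0 : 0 < M := by positivity
  have hfy : ContinuousAt (fun t => f (y t)) 0 := hfc.continuousAt.comp (hyc 0 h0mem)
  have ev1 : ∀ᶠ t in nhds (0:ℝ), ‖f (y t)‖ ≤ M := by
    have h1 : Tendsto (fun t => ‖f (y t)‖) (nhds 0) (nhds ‖f (y 0)‖) := hfy.norm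
    rw [hy0] at h1
    exact h1.eventually (eventually_le_nhds (by rw [hMdef]; linarith))
  have ev2 : ∀ᶠ t in nhds (0:ℝ), ‖y t - x₀‖ ≤ rf := by
    have h1 : Tendsto (fun t => ‖y t - x₀‖) (nhds 0) (nhds ‖y 0 - x₀‖) :=
      ((hyc 0 h0mem).sub continuousAt_const).norm
    rw [hy0, sub_self, norm_zero] at h1
    exact h1.eventually (eventually_le_nhds hrf)
  have ev3 : ∀ᶠ t in nhds (0:ℝ), t ∈ Set.Ioo (-ε) ε :=
    eventually_mem_nhds_iff.mpr (Ioo_mem_nhds (by linarith) hε) |>.mono (fun _ h => mem_of_mem_nhds h)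
  obtain ⟨δ, hδ, hP⟩ := Metric.eventually_nhds_iff.1 ((ev1.and ev2).and ev3)
  have hP' : ∀ t : ℝ, |t| < δ →
      (‖f (y t)‖ ≤ M ∧ ‖y t - x₀‖ ≤ rf) ∧ t ∈ Set.Ioo (-ε) ε := by
    intro t ht
    exact hP (by rwa [Real.dist_eq, sub_zero])
  -- |t| ≤ |h| for t in the interval
  have habs : ∀ h t : ℝ, t ∈ Set.uIcc 0 h → |t| ≤ |h| := by
    intro h t ht
    rcases Set.mem_uIcc.1 ht with ⟨h1, h2⟩ | ⟨h1, h2⟩ <;> rw [abs_le] <;>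
      constructor <;> linarith [le_abs_self h, neg_abs_le h]
  have hintg : ∀ h : ℝ, |h| < δ →
      IntervalIntegrable (fun t => f (y t)) MeasureTheory.volume 0 h := by
    intro h hh
    apply ContinuousOn.intervalIntegrable
    intro t ht
    exact (hfc.continuousAt.comp (hyc t ((hP' t (lt_of_le_of_lt (habs h t ht) hh)).2))).continuousWithinAt
  have hFTC : ∀ h : ℝ, |h| < δ → (∫ t in (0:ℝ)..h, f (y t)) = y h - x₀ := by
    intro h hh
    rw [← hy0]
    exact intervalIntegral.integral_eq_sub_of_hasDerivAt
      (fun t ht => hy t (hP' t (lt_of_le_of_lt (habs h t ht) hh)).2) (hintg h hh)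
  have hY0 : ∀ h : ℝ, |h| < δ → ‖y h - x₀‖ ≤ M * |h| := by
    intro h hh
    rw [← hFTC h hh]
    have := intervalIntegral.norm_integral_le_of_norm_le_const (a := (0:ℝ)) (b := h)
      (C := M) (f := fun t => f (y t)) (fun t ht => (hP' t (lt_of_le_of_lt
        (habs h t (Set.uIoc_subset_uIcc ht)) hh)).1.1)
    simpa using this
  set L := ‖D‖ + Kf * rf with hLdef
  have hL0 : 0 ≤ L := by positivity
  have hLip : ∀ x, ‖x - x₀‖ ≤ rf → ‖f x - f x₀‖ ≤ L * ‖x - x₀‖ := by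
    intro x hx
    have h1 := hq x hx
    have h2 : ‖f x - f x₀‖ ≤ ‖f x - f x₀ - D (x - x₀)‖ + ‖D (x - x₀)‖ := by
      calc ‖f x - f x₀‖ = ‖(f x - f x₀ - D (x - x₀)) + D (x - x₀)‖ := by abel_nf
        _ ≤ _ := norm_add_le _ _
    have h3 : ‖D (x - x₀)‖ ≤ ‖D‖ * ‖x - x₀‖ := D.le_opNorm _
    simp only [hLdef]
    nlinarith [norm_nonneg (x - x₀), mul_nonneg hKf (mul_nonneg (sub_nonneg.2 hx) (norm_nonneg (x - x₀)))]
  have hY1 : ∀ h : ℝ, |h| < δ → ‖y h - x₀ - h • f x₀‖ ≤ L * M * h ^ 2 := by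
    intro h hh
    have hid : y h - x₀ - h • f x₀ = ∫ t in (0:ℝ)..h, (f (y t) - f x₀) := by
      rw [intervalIntegral.integral_sub (hintg h hh) (continuous_const.intervalIntegrable _ _),
        intervalIntegral.integral_const, hFTC h hh]
      simp
    rw [hid]
    have hbd := intervalIntegral.norm_integral_le_of_norm_le_const (a := (0:ℝ)) (b := h)
      (C := L * M * |h|) (f := fun t => f (y t) - f x₀) ?_
    · rw [sub_zero] at hbd
      calc ‖∫ t in (0:ℝ)..h, (f (y t) - f x₀)‖ ≤ L * M * |h| * |h| := hbd
        _ = L * M * h ^ 2 := by rw [← sq_abs h]; ring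
    · intro t ht
      have htle : |t| ≤ |h| := habs h t (Set.uIoc_subset_uIcc ht)
      have htδ : |t| < δ := lt_of_le_of_lt htle hh
      have h1 := hLip (y t) (hP' t htδ).1.2
      have h2 := hY0 t htδ
      calc ‖f (y t) - f x₀‖ ≤ L * ‖y t - x₀‖ := h1
        _ ≤ L * (M * |t|) := mul_le_mul_of_nonneg_left h2 hL0
        _ ≤ L * M * |h| := by rw [← mul_assoc]; exact
            mul_le_mul_of_nonneg_left htle (by positivity)
  refine ⟨Kf * M ^ 2 + ‖D‖ * (L * M), δ, hδ, fun h hh => ?_⟩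
  have hid : y h - x₀ - h • f x₀ - (h ^ 2 / 2) • D (f x₀)
      = ∫ t in (0:ℝ)..h, (f (y t) - f x₀ - t • D (f x₀)) := by
    have hi1 : IntervalIntegrable (fun t => f (y t) - f x₀) MeasureTheory.volume 0 h :=
      (hintg h hh).sub (continuous_const.intervalIntegrable _ _)
    have hi2 : IntervalIntegrable (fun t : ℝ => t • D (f x₀)) MeasureTheory.volume 0 h := by
      exact (continuous_id.smul continuous_const).intervalIntegrable _ _
    rw [intervalIntegral.integral_sub hi1 hi2,
      intervalIntegral.integral_sub (hintg h hh) (continuous_const.intervalIntegrable _ _),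
      intervalIntegral.integral_const, intervalIntegral.integral_smul_const, integral_id,
      hFTC h hh]
    simp [sub_sub]
  rw [hid]
  have hbd := intervalIntegral.norm_integral_le_of_norm_le_const (a := (0:ℝ)) (b := h)
    (C := (Kf * M ^ 2 + ‖D‖ * (L * M)) * h ^ 2)
    (f := fun t => f (y t) - f x₀ - t • D (f x₀)) ?_
  · rw [sub_zero] at hbd
    calc ‖∫ t in (0:ℝ)..h, (f (y t) - f x₀ - t • D (f x₀))‖
        ≤ (Kf * M ^ 2 + ‖D‖ * (L * M)) * h ^ 2 * |h| := hbd
      _ = (Kf * M ^ 2 + ‖D‖ * (L * M)) * |h| ^ 3 := by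
          rw [← sq_abs h]; ring
  · intro t ht
    have htle : |t| ≤ |h| := habs h t (Set.uIoc_subset_uIcc ht)
    have htδ : |t| < δ := lt_of_le_of_lt htle hh
    have hsplit : f (y t) - f x₀ - t • D (f x₀)
        = (f (y t) - f x₀ - D (y t - x₀)) + D (y t - x₀ - t • f x₀) := by
      simp only [map_sub, map_smul]
      abel
    show ‖f (y t) - f x₀ - t • D (f x₀)‖ ≤ (Kf * M ^ 2 + ‖D‖ * (L * M)) * h ^ 2
    rw [hsplit]
    have h1 := hq (y t) (hP' t htδ).1.2
    have h2 : ‖D (y t - x₀ - t • f x₀)‖ ≤ ‖D‖ * (L * M * t ^ 2) := by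
      calc ‖D (y t - x₀ - t • f x₀)‖ ≤ ‖D‖ * ‖y t - x₀ - t • f x₀‖ := D.le_opNorm _
        _ ≤ ‖D‖ * (L * M * t ^ 2) := mul_le_mul_of_nonneg_left (hY1 t htδ) (norm_nonneg _)
    have h3 : ‖y t - x₀‖ ≤ M * |t| := hY0 t htδ
    have ht2 : t ^ 2 ≤ h ^ 2 := by
      nlinarith [sq_abs t, sq_abs h, abs_nonneg t, abs_nonneg h]
    calc ‖(f (y t) - f x₀ - D (y t - x₀)) + D (y t - x₀ - t • f x₀)‖
        ≤ ‖f (y t) - f x₀ - D (y t - x₀)‖ + ‖D (y t - x₀ - t • f x₀)‖ := norm_add_le _ _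
      _ ≤ Kf * ‖y t - x₀‖ ^ 2 + ‖D‖ * (L * M * t ^ 2) := add_le_add h1 h2
      _ ≤ Kf * (M * |t|) ^ 2 + ‖D‖ * (L * M * t ^ 2) := by
          have : ‖y t - x₀‖ ^ 2 ≤ (M * |t|) ^ 2 := by
            nlinarith [norm_nonneg (y t - x₀), abs_nonneg t]
          nlinarith
      _ = (Kf * M ^ 2 + ‖D‖ * (L * M)) * t ^ 2 := by
          rw [mul_pow, sq_abs]; ring
      _ ≤ (Kf * M ^ 2 + ‖D‖ * (L * M)) * h ^ 2 := by
          apply mul_le_mul_of_nonneg_left ht2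
          positivity

set_option maxHeartbeats 1000000

/-- **Proposition 2.** The AVF discrete gradient scheme with
`S̄(x,x̂,h) = S((x+x̂)/2)` is of second order: `‖x̂(h) − y(h)‖ = O(h³)` as `h → 0`, where `y` is
the exact solution of `y' = S(y)∇H(y)`, `y(0) = x₀`. -/
theorem avf_discrete_gradient_midpoint_S_second_order
    (d : ℕ)
    (S : EuclideanSpace ℝ (Fin d) →
      (EuclideanSpace ℝ (Fin d) →L[ℝ] EuclideanSpace ℝ (Fin d)))
    (hS2 : ContDiff ℝ 2 S)
    (hSskew : ∀ x u v, ⟪S x u, v⟫ = -⟪u, S x v⟫)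
    (H : EuclideanSpace ℝ (Fin d) → ℝ) (hH : ContDiff ℝ 3 H)
    (x₀ : EuclideanSpace ℝ (Fin d)) (ε : ℝ) (hε : 0 < ε)
    (y : ℝ → EuclideanSpace ℝ (Fin d)) (hy0 : y 0 = x₀)
    (hy : ∀ t ∈ Set.Ioo (-ε) ε, HasDerivAt y (S (y t) (gradient H (y t))) t)
    (xh : ℝ → EuclideanSpace ℝ (Fin d))
    (hxhlim : Tendsto xh (nhds 0) (nhds x₀))
    (hscheme : ∀ h ∈ Set.Ioo (-ε) ε, xh h = x₀ + h •
      (S ((2 : ℝ)⁻¹ • (x₀ + xh h)))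
        (∫ ξ in (0:ℝ)..1, gradient H ((1 - ξ) • x₀ + ξ • xh h))) :
    (fun h => xh h - y h) =O[nhds 0] fun h => h ^ 3 := by
  have hg2 : ContDiff ℝ 2 (gradient H) := by
    have h1 : ContDiff ℝ 2 (fderiv ℝ H) := hH.fderiv_right (by norm_num)
    have h2 : gradient H = fun x =>
        (InnerProductSpace.toDual ℝ (EuclideanSpace ℝ (Fin d))).symm (fderiv ℝ H x) := rfl
    rw [h2]
    exact (InnerProductSpace.toDual ℝ (EuclideanSpace ℝ (Fin d))).symm.contDiff.comp h1
  have hf2 : ContDiff ℝ 2 (fun x => S x (gradient H x)) := hS2.clm_apply hg2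
  have hD : ∀ v, (fderiv ℝ (fun x => S x (gradient H x)) x₀) v
      = S x₀ ((fderiv ℝ (gradient H) x₀) v) + ((fderiv ℝ S x₀) v) (gradient H x₀) := by
    intro v
    rw [fderiv_clm_apply (hS2.differentiable (by norm_num) x₀)
      (hg2.differentiable (by norm_num) x₀)]
    simp
  obtain ⟨KS, rS, hKS, hrS, hSq⟩ := quad_taylor_bound (hS2.contDiffAt (x := x₀))
  obtain ⟨Kg, rg, hKg, hrg, hgq⟩ := quad_taylor_bound (hg2.contDiffAt (x := x₀))
  obtain ⟨Kf, rf, hKf, hrf, hfq⟩ := quad_taylor_bound (hf2.contDiffAt (x := x₀))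
  obtain ⟨Cy, δy, hδy, hY⟩ := ode_taylor2 hf2.continuous hKf hrf hfq hε hy0
    (fun t ht => hy t ht)
  have hY' : ∀ h : ℝ, |h| < δy → ‖y h - x₀ - h • (S x₀ (gradient H x₀))
      - (h ^ 2 / 2) • (fderiv ℝ (fun x => S x (gradient H x)) x₀)
        (S x₀ (gradient H x₀))‖ ≤ Cy * |h| ^ 3 := hY
  obtain ⟨Cx, hX⟩ := scheme_taylor2 (S := S) (g := gradient H) (x₀ := x₀)
    hg2.continuous hKS hrS hKg hrg hSq hgq hD hε hxhlim hscheme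
  rw [isBigO_iff]
  refine ⟨Cx + Cy, ?_⟩
  have hev : ∀ᶠ h in nhds (0:ℝ), |h| < δy := by
    have := eventually_abs_sub_lt (0:ℝ) hδy
    simpa using this
  filter_upwards [hX, hev] with h hx hhy
  have h1 := hY' h hhy
  have hiden : xh h - y h
      = (xh h - x₀ - h • (S x₀ (gradient H x₀)) - (h ^ 2 / 2) •
          (fderiv ℝ (fun x => S x (gradient H x)) x₀) (S x₀ (gradient H x₀)))
        - (y h - x₀ - h • (S x₀ (gradient H x₀)) - (h ^ 2 / 2) •
          (fderiv ℝ (fun x => S x (gradient H x)) x₀) (S x₀ (gradient H x₀))) := by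
    abel
  rw [hiden]
  refine (norm_sub_le _ _).trans ?_
  have h2 : ‖h ^ 3‖ = |h| ^ 3 := by rw [Real.norm_eq_abs, abs_pow]
  rw [h2]
  calc _ ≤ Cx * |h| ^ 3 + Cy * |h| ^ 3 := add_le_add hx h1
    _ = (Cx + Cy) * |h| ^ 3 := by ring
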